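/- Let x = (x₁,x₂,x₃) ∈ ℝ³ with θ := ‖x‖ > 0, and for α ∈ {1,2,3} let D_α(x) denote the Fréchet derivative at x of the map y ↦ exp(ŷ), applied to the standard basis vector e_α. Then for all α, β ∈ {1,2,3}: (1/2)⟨D_α(x), D_β(x)⟩_F = ((2 cos θ − 2 + θ²)/θ⁴) x_α x_β + (2(1 − cos θ)/θ²) δ_{αβ}. -/

import Mathlib

open Matrix Real

noncomputable section

/-- `ℝ³` with the Euclidean norm. -/
abbrev E3 := EuclideanSpace ℝ (Fin 3)

/-- Hat map: the skew-symmetric matrix associated to a vector `x ∈ ℝ³`,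
with rows `(0, −x₃, x₂)`, `(x₃, 0, −x₁)`, `(−x₂, x₁, 0)`. -/
def hat (x : E3) : Matrix (Fin 3) (Fin 3) ℝ :=
  !![0, -x 2, x 1; x 2, 0, -x 0; -x 1, x 0, 0]

/-- Standard basis vectors `e_α` of `ℝ³`. -/
def e (α : Fin 3) : E3 := EuclideanSpace.single α 1

attribute [local instance] Matrix.normedAddCommGroup Matrix.normedSpace

/-- Frobenius inner product `⟨A,B⟩_F = tr(AᵀB)`. -/
def frob (A B : Matrix (Fin 3) (Fin 3) ℝ) : ℝ := (Aᵀ * B).trace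


abbrev M3 := Matrix (Fin 3) (Fin 3) ℝ

lemma norm_sq_eq (x : E3) : ‖x‖ ^ 2 = x 0 ^ 2 + x 1 ^ 2 + x 2 ^ 2 := by
  rw [EuclideanSpace.norm_eq, Real.sq_sqrt (by positivity)]
  simp [Fin.sum_univ_three, sq_abs]

lemma hat_cube (x : E3) : hat x ^ 3 = (-(‖x‖ ^ 2)) • hat x := by
  have h := norm_sq_eq x
  rw [h]
  ext i j
  fin_cases i <;> fin_cases j <;>
    simp [hat, pow_succ, Matrix.mul_apply, Fin.sum_univ_three] <;> ring

lemma hat_pow_odd (x : E3) (k : ℕ) :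
    hat x ^ (2 * k + 1) = ((-(‖x‖ ^ 2)) ^ k) • hat x := by
  induction k with
  | zero => simp
  | succ n ih =>
    have h1 : 2 * (n + 1) + 1 = (2 * n + 1) + 2 := by ring
    rw [h1, pow_add, ih, smul_mul_assoc]
    have h2 : hat x * hat x ^ 2 = hat x ^ 3 := (pow_succ' _ 2).symm
    rw [h2, hat_cube, smul_smul, ← pow_succ]

lemma hat_pow_even (x : E3) (k : ℕ) :
    hat x ^ (2 * k + 2) = ((-(‖x‖ ^ 2)) ^ k) • hat x ^ 2 := by
  have := hat_pow_odd x k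
  calc hat x ^ (2 * k + 2) = hat x ^ (2 * k + 1) * hat x := by rw [← pow_succ]
    _ = ((-(‖x‖ ^ 2)) ^ k) • hat x ^ 2 := by rw [this, smul_mul_assoc, ← pow_two]

/-- The scalar series for `sin r / r`. -/
lemma hasSum_sin_div (r : ℝ) (hr : r ≠ 0) :
    HasSum (fun k : ℕ => ((-(r ^ 2)) ^ k) * ((Nat.factorial (2 * k + 1) : ℝ))⁻¹)
      (Real.sin r / r) := by
  have h := (Real.hasSum_sin r).div_const r
  convert h using 3 with k
  · rfl
  have hf : ((Nat.factorial (2 * k + 1) : ℝ)) ≠ 0 := by positivity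
  field_simp
  ring

/-- The scalar series for `(1 - cos r) / r ^ 2`. -/
lemma hasSum_one_sub_cos_div (r : ℝ) (hr : r ≠ 0) :
    HasSum (fun k : ℕ => ((-(r ^ 2)) ^ k) * ((Nat.factorial (2 * k + 2) : ℝ))⁻¹)
      ((1 - Real.cos r) / r ^ 2) := by
  set g : ℕ → ℝ := fun n => (-1) ^ n * r ^ (2 * n) / ((2 * n).factorial : ℝ) with hg
  have h0 : HasSum g (Real.cos r) := Real.hasSum_cos r
  have h1 : HasSum (fun n => g (n + 1)) (Real.cos r - 1) := by
    rw [hasSum_nat_add_iff 1]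
    simpa [hg] using h0
  have h2 := h1.div_const (-(r ^ 2))
  have h3 : (Real.cos r - 1) / (-(r ^ 2)) = (1 - Real.cos r) / r ^ 2 := by
    ring
  rw [h3] at h2
  convert h2 using 3 with k
  · rfl
  have hf : (((2 * (k + 1)).factorial : ℝ)) ≠ 0 := by positivity
  have h4 : 2 * (k + 1) = 2 * k + 2 := by ring
  rw [hg]
  simp only []
  rw [h4] at hf ⊢
  field_simp
  ring

/-- Rodrigues' formula. -/
lemma exp_hat_eq (x : E3) (hx : ‖x‖ ≠ 0) :
    NormedSpace.exp (hat x) =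
      1 + (Real.sin ‖x‖ / ‖x‖) • hat x
        + ((1 - Real.cos ‖x‖) / ‖x‖ ^ 2) • hat x ^ 2 := by
  set r := ‖x‖ with hrdef
  set f : ℕ → Matrix (Fin 3) (Fin 3) ℝ :=
    fun n => ((n.factorial : ℝ))⁻¹ • hat x ^ n with hf
  have hodd : HasSum (fun k => f (2 * k + 1)) ((Real.sin r / r) • hat x) := by
    have h := (hasSum_sin_div r hx).smul_const (hat x)
    convert h using 2 with k
    rw [hf]
    simp only []
    rw [hat_pow_odd, smul_smul, mul_comm]
  have heven2 : HasSum (fun k => f (2 * (k + 1)))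
      (((1 - Real.cos r) / r ^ 2) • hat x ^ 2) := by
    have h := (hasSum_one_sub_cos_div r hx).smul_const (hat x ^ 2)
    convert h using 2 with k
    rw [hf]
    simp only []
    have h4 : 2 * (k + 1) = 2 * k + 2 := by ring
    rw [h4, hat_pow_even, smul_smul, mul_comm]
  have heven : HasSum (fun k => f (2 * k))
      (1 + ((1 - Real.cos r) / r ^ 2) • hat x ^ 2) := by
    have := (hasSum_nat_add_iff (f := fun k => f (2 * k)) 1).mp heven2
    simpa [hf, add_comm] using this
  have hsum : HasSum f (1 + (Real.sin r / r) • hat x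
      + ((1 - Real.cos r) / r ^ 2) • hat x ^ 2) := by
    have := heven.even_add_odd hodd
    convert this using 1
    abel
  rw [NormedSpace.exp_eq_tsum ℝ]
  exact hsum.tsum_eq


/-- `hat` as a linear map. -/
def hatLM : E3 →ₗ[ℝ] M3 where
  toFun := hat
  map_add' a b := by
    ext i j
    fin_cases i <;> fin_cases j <;> simp [hat] <;> ring
  map_smul' c a := by
    ext i j
    fin_cases i <;> fin_cases j <;> simp [hat]

/-- `hat` as a continuous linear map. -/
def hatL : E3 →L[ℝ] M3 := LinearMap.toContinuousLinearMap hatLM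

@[simp] lemma hatL_apply (y : E3) : hatL y = hat y := rfl

/-- Matrix multiplication as a continuous bilinear map. -/
def mulCLM : M3 →L[ℝ] M3 →L[ℝ] M3 :=
  LinearMap.toContinuousLinearMap
    ((LinearMap.toContinuousLinearMap :
        (M3 →ₗ[ℝ] M3) ≃ₗ[ℝ] (M3 →L[ℝ] M3)).toLinearMap ∘ₗ (LinearMap.mul ℝ M3))

@[simp] lemma mulCLM_apply (A B : M3) : mulCLM A B = A * B := rfl

lemma hasFDerivAt_norm (x : E3) (hx : ‖x‖ ≠ 0) :
    HasFDerivAt (fun y : E3 => ‖y‖)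
      ((1 / (2 * ‖x‖)) • ((fderivInnerCLM ℝ (x, x)).comp
        ((ContinuousLinearMap.id ℝ E3).prod (ContinuousLinearMap.id ℝ E3)))) x := by
  have hinner : HasFDerivAt (fun y : E3 => (inner ℝ y y : ℝ))
      ((fderivInnerCLM ℝ (x, x)).comp
        ((ContinuousLinearMap.id ℝ E3).prod (ContinuousLinearMap.id ℝ E3))) x :=
    (hasFDerivAt_id x).inner ℝ (hasFDerivAt_id x)
  have hipos : (inner ℝ x x : ℝ) ≠ 0 := by
    rw [real_inner_self_eq_norm_sq]
    positivity
  have hs : HasDerivAt Real.sqrt (1 / (2 * Real.sqrt (inner ℝ x x : ℝ))) (inner ℝ x x : ℝ) :=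
    Real.hasDerivAt_sqrt hipos
  have hcomp := HasDerivAt.comp_hasFDerivAt (f := fun y : E3 => (inner ℝ y y : ℝ)) x hs hinner
  have heq : (Real.sqrt ∘ fun y : E3 => (inner ℝ y y : ℝ)) = fun y : E3 => ‖y‖ := by
    funext y
    show Real.sqrt (inner ℝ y y : ℝ) = ‖y‖
    rw [real_inner_self_eq_norm_sq, Real.sqrt_sq (norm_nonneg y)]
  rw [heq] at hcomp
  have hsq : Real.sqrt (inner ℝ x x : ℝ) = ‖x‖ := by
    rw [real_inner_self_eq_norm_sq, Real.sqrt_sq (norm_nonneg x)]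
  rw [hsq] at hcomp
  exact hcomp

lemma fderiv_exp_hat_apply (x : E3) (hx : 0 < ‖x‖) (v : E3) :
    fderiv ℝ (fun y : E3 => NormedSpace.exp (hat y)) x v =
      (((‖x‖ * Real.cos ‖x‖ - Real.sin ‖x‖) / ‖x‖ ^ 3) * (inner ℝ x v : ℝ)) • hat x
      + (Real.sin ‖x‖ / ‖x‖) • hat v
      + (((‖x‖ * Real.sin ‖x‖ - 2 * (1 - Real.cos ‖x‖)) / ‖x‖ ^ 4) * (inner ℝ x v : ℝ))
          • (hat x * hat x)
      + ((1 - Real.cos ‖x‖) / ‖x‖ ^ 2) • (hat x * hat v + hat v * hat x) := by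
  have hr : ‖x‖ ≠ 0 := ne_of_gt hx
  have hN := hasFDerivAt_norm x hr
  set NL : E3 →L[ℝ] ℝ := (1 / (2 * ‖x‖)) • ((fderivInnerCLM ℝ (x, x)).comp
      ((ContinuousLinearMap.id ℝ E3).prod (ContinuousLinearMap.id ℝ E3))) with hNL
  have hNv : ∀ w : E3, NL w = (inner ℝ x w : ℝ) / ‖x‖ := by
    intro w
    rw [hNL]
    simp only [ContinuousLinearMap.smul_apply, ContinuousLinearMap.comp_apply,
      ContinuousLinearMap.prod_apply, ContinuousLinearMap.id_apply, fderivInnerCLM_apply,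
      smul_eq_mul]
    rw [real_inner_comm w x]
    field_simp
    ring
  -- derivative of sin t / t composed with norm
  have hgt : HasFDerivAt (fun y : E3 => Real.sin ‖y‖ / ‖y‖)
      (((Real.cos ‖x‖ * ‖x‖ - Real.sin ‖x‖ * 1) / ‖x‖ ^ 2) • NL) x := by
    have := HasDerivAt.comp_hasFDerivAt (f := fun y : E3 => ‖y‖) x
      ((Real.hasDerivAt_sin ‖x‖).div (hasDerivAt_id ‖x‖) hr) hN
    simpa [Function.comp_def, Pi.div_apply, Pi.sub_apply] using this
  -- derivative of (1 - cos t)/t^2 composed with norm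
  have hht : HasFDerivAt (fun y : E3 => (1 - Real.cos ‖y‖) / ‖y‖ ^ 2)
      ((((0 - -Real.sin ‖x‖) * ‖x‖ ^ 2 - (1 - Real.cos ‖x‖) * ((2 : ℕ) * ‖x‖ ^ (2 - 1)))
        / (‖x‖ ^ 2) ^ 2) • NL) x := by
    have := HasDerivAt.comp_hasFDerivAt (f := fun y : E3 => ‖y‖) x
      (((hasDerivAt_const ‖x‖ (1 : ℝ)).sub (Real.hasDerivAt_cos ‖x‖)).div
        (hasDerivAt_pow 2 ‖x‖) (pow_ne_zero 2 hr)) hN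
    simpa [Function.comp_def, Pi.div_apply, Pi.sub_apply] using this
  have hhat : HasFDerivAt (fun y : E3 => hat y) hatL x := hatL.hasFDerivAt
  have hb := (mulCLM.isBoundedBilinearMap.hasFDerivAt (hat x, hat x)).comp x (hhat.prodMk hhat)
  simp only [Function.comp_def] at hb
  have h1 := hgt.smul hhat
  have h2 := hht.smul hb
  have h3 := (h1.const_add (1 : M3)).add h2
  have hev : (fun y : E3 => NormedSpace.exp (hat y)) =ᶠ[nhds x]
      (fun y : E3 => (1 : M3) + (Real.sin ‖y‖ / ‖y‖) • hat y
        + ((1 - Real.cos ‖y‖) / ‖y‖ ^ 2) • (mulCLM (hat y) (hat y))) := by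
    have hx0 : x ≠ 0 := by
      intro h
      rw [h, norm_zero] at hx
      exact lt_irrefl 0 hx
    filter_upwards [eventually_ne_nhds hx0] with y hy
    rw [exp_hat_eq y (norm_ne_zero_iff.mpr hy)]
    simp [pow_two]
  have h4 := h3.congr_of_eventuallyEq hev
  have h5 := congrArg (fun L => L v) h4.fderiv
  simp only [ContinuousLinearMap.add_apply, ContinuousLinearMap.smul_apply,
    ContinuousLinearMap.smulRight_apply, ContinuousLinearMap.comp_apply,
    ContinuousLinearMap.prod_apply, ContinuousLinearMap.zero_apply, hatL_apply,
    Function.comp, IsBoundedBilinearMap.deriv_apply, mulCLM_apply, hNv, smul_eq_mul] at h5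
  refine Eq.trans h5 ?_
  have e1 : ((Real.sin ‖x‖ / ‖x‖) • hatL) v = (Real.sin ‖x‖ / ‖x‖) • hat v := rfl
  have e2 : (hatL.prod hatL) v = (hat v, hat v) := rfl
  erw [e1, e2]
  erw [mulCLM_apply, mulCLM_apply, mulCLM_apply]
  match_scalars <;> (try field_simp) <;> ring

lemma frob_eq (A B : M3) : frob A B =
    A 0 0 * B 0 0 + A 0 1 * B 0 1 + A 0 2 * B 0 2
    + A 1 0 * B 1 0 + A 1 1 * B 1 1 + A 1 2 * B 1 2
    + A 2 0 * B 2 0 + A 2 1 * B 2 1 + A 2 2 * B 2 2 := by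
  simp [frob, Matrix.trace, Matrix.mul_apply, Matrix.transpose_apply, Fin.sum_univ_three,
    Matrix.diag]
  ring

lemma frob_smul_smul (a b : ℝ) (A B : M3) : frob (a • A) (b • B) = a * b * frob A B := by
  rw [frob_eq, frob_eq]
  simp only [Matrix.smul_apply, smul_eq_mul]
  ring

/-- The polynomial matrix `N_α`. -/
def NN (x : E3) (s c r : ℝ) (α : Fin 3) : M3 :=
  (x α * (r * (r * c - s))) • hat x + (s * r ^ 3) • hat (e α)
  + (x α * (r * s - 2 + 2 * c)) • (hat x * hat x)
  + ((1 - c) * r ^ 2) • (hat (e α) * hat x + hat x * hat (e α))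

set_option maxHeartbeats 2000000 in
set_option maxRecDepth 8000 in
lemma key (x : E3) (s c r : ℝ) (hr : r ^ 2 = x 0 ^ 2 + x 1 ^ 2 + x 2 ^ 2)
    (hsc : s ^ 2 + c ^ 2 = 1) (α β : Fin 3) :
    frob (NN x s c r α) (NN x s c r β) =
      2 * r ^ 4 * (2 * c - 2 + r ^ 2) * (x α * x β)
        + 4 * r ^ 6 * (1 - c) * (if α = β then 1 else 0) := by
  fin_cases α <;> fin_cases β <;> rw [frob_eq] <;>
    simp [NN, hat, e, Matrix.mul_apply, Fin.sum_univ_three,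
      EuclideanSpace.single_apply, Matrix.smul_apply, Matrix.add_apply]
  · linear_combination (x 0 * x 0 * (2*r ^ 2*((x 0 ^ 2 + x 1 ^ 2 + x 2 ^ 2) + (x 0 ^ 2 + x 1 ^ 2 + x 2 ^ 2) ^ 2 - 2*r ^ 2)) + 1*(2*r ^ 6)) * hsc + (x 0 * x 0 * (6*r ^ 2 - 2*r ^ 4 - 16*c*r ^ 2 + 10*c ^ 2*r ^ 2 + 4*s*c*r ^ 3 + (x 0 ^ 2 + x 1 ^ 2 + x 2 ^ 2)*(-8 - 2*r ^ 2 + 16*c - 8*c ^ 2 + 2*c ^ 2*r ^ 2 + 8*s*r - 8*s*c*r)) + 1*(-(2*r ^ 4*(1-c) ^ 2))) * hr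
  · linear_combination (x 0 * x 1 * (2*r ^ 2*((x 0 ^ 2 + x 1 ^ 2 + x 2 ^ 2) + (x 0 ^ 2 + x 1 ^ 2 + x 2 ^ 2) ^ 2 - 2*r ^ 2)) + 0*(2*r ^ 6)) * hsc + (x 0 * x 1 * (6*r ^ 2 - 2*r ^ 4 - 16*c*r ^ 2 + 10*c ^ 2*r ^ 2 + 4*s*c*r ^ 3 + (x 0 ^ 2 + x 1 ^ 2 + x 2 ^ 2)*(-8 - 2*r ^ 2 + 16*c - 8*c ^ 2 + 2*c ^ 2*r ^ 2 + 8*s*r - 8*s*c*r)) + 0*(-(2*r ^ 4*(1-c) ^ 2))) * hr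
  · linear_combination (x 0 * x 2 * (2*r ^ 2*((x 0 ^ 2 + x 1 ^ 2 + x 2 ^ 2) + (x 0 ^ 2 + x 1 ^ 2 + x 2 ^ 2) ^ 2 - 2*r ^ 2)) + 0*(2*r ^ 6)) * hsc + (x 0 * x 2 * (6*r ^ 2 - 2*r ^ 4 - 16*c*r ^ 2 + 10*c ^ 2*r ^ 2 + 4*s*c*r ^ 3 + (x 0 ^ 2 + x 1 ^ 2 + x 2 ^ 2)*(-8 - 2*r ^ 2 + 16*c - 8*c ^ 2 + 2*c ^ 2*r ^ 2 + 8*s*r - 8*s*c*r)) + 0*(-(2*r ^ 4*(1-c) ^ 2))) * hr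
  · linear_combination (x 1 * x 0 * (2*r ^ 2*((x 0 ^ 2 + x 1 ^ 2 + x 2 ^ 2) + (x 0 ^ 2 + x 1 ^ 2 + x 2 ^ 2) ^ 2 - 2*r ^ 2)) + 0*(2*r ^ 6)) * hsc + (x 1 * x 0 * (6*r ^ 2 - 2*r ^ 4 - 16*c*r ^ 2 + 10*c ^ 2*r ^ 2 + 4*s*c*r ^ 3 + (x 0 ^ 2 + x 1 ^ 2 + x 2 ^ 2)*(-8 - 2*r ^ 2 + 16*c - 8*c ^ 2 + 2*c ^ 2*r ^ 2 + 8*s*r - 8*s*c*r)) + 0*(-(2*r ^ 4*(1-c) ^ 2))) * hr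
  · linear_combination (x 1 * x 1 * (2*r ^ 2*((x 0 ^ 2 + x 1 ^ 2 + x 2 ^ 2) + (x 0 ^ 2 + x 1 ^ 2 + x 2 ^ 2) ^ 2 - 2*r ^ 2)) + 1*(2*r ^ 6)) * hsc + (x 1 * x 1 * (6*r ^ 2 - 2*r ^ 4 - 16*c*r ^ 2 + 10*c ^ 2*r ^ 2 + 4*s*c*r ^ 3 + (x 0 ^ 2 + x 1 ^ 2 + x 2 ^ 2)*(-8 - 2*r ^ 2 + 16*c - 8*c ^ 2 + 2*c ^ 2*r ^ 2 + 8*s*r - 8*s*c*r)) + 1*(-(2*r ^ 4*(1-c) ^ 2))) * hr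
  · linear_combination (x 1 * x 2 * (2*r ^ 2*((x 0 ^ 2 + x 1 ^ 2 + x 2 ^ 2) + (x 0 ^ 2 + x 1 ^ 2 + x 2 ^ 2) ^ 2 - 2*r ^ 2)) + 0*(2*r ^ 6)) * hsc + (x 1 * x 2 * (6*r ^ 2 - 2*r ^ 4 - 16*c*r ^ 2 + 10*c ^ 2*r ^ 2 + 4*s*c*r ^ 3 + (x 0 ^ 2 + x 1 ^ 2 + x 2 ^ 2)*(-8 - 2*r ^ 2 + 16*c - 8*c ^ 2 + 2*c ^ 2*r ^ 2 + 8*s*r - 8*s*c*r)) + 0*(-(2*r ^ 4*(1-c) ^ 2))) * hr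
  · linear_combination (x 2 * x 0 * (2*r ^ 2*((x 0 ^ 2 + x 1 ^ 2 + x 2 ^ 2) + (x 0 ^ 2 + x 1 ^ 2 + x 2 ^ 2) ^ 2 - 2*r ^ 2)) + 0*(2*r ^ 6)) * hsc + (x 2 * x 0 * (6*r ^ 2 - 2*r ^ 4 - 16*c*r ^ 2 + 10*c ^ 2*r ^ 2 + 4*s*c*r ^ 3 + (x 0 ^ 2 + x 1 ^ 2 + x 2 ^ 2)*(-8 - 2*r ^ 2 + 16*c - 8*c ^ 2 + 2*c ^ 2*r ^ 2 + 8*s*r - 8*s*c*r)) + 0*(-(2*r ^ 4*(1-c) ^ 2))) * hr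
  · linear_combination (x 2 * x 1 * (2*r ^ 2*((x 0 ^ 2 + x 1 ^ 2 + x 2 ^ 2) + (x 0 ^ 2 + x 1 ^ 2 + x 2 ^ 2) ^ 2 - 2*r ^ 2)) + 0*(2*r ^ 6)) * hsc + (x 2 * x 1 * (6*r ^ 2 - 2*r ^ 4 - 16*c*r ^ 2 + 10*c ^ 2*r ^ 2 + 4*s*c*r ^ 3 + (x 0 ^ 2 + x 1 ^ 2 + x 2 ^ 2)*(-8 - 2*r ^ 2 + 16*c - 8*c ^ 2 + 2*c ^ 2*r ^ 2 + 8*s*r - 8*s*c*r)) + 0*(-(2*r ^ 4*(1-c) ^ 2))) * hr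
  · linear_combination (x 2 * x 2 * (2*r ^ 2*((x 0 ^ 2 + x 1 ^ 2 + x 2 ^ 2) + (x 0 ^ 2 + x 1 ^ 2 + x 2 ^ 2) ^ 2 - 2*r ^ 2)) + 1*(2*r ^ 6)) * hsc + (x 2 * x 2 * (6*r ^ 2 - 2*r ^ 4 - 16*c*r ^ 2 + 10*c ^ 2*r ^ 2 + 4*s*c*r ^ 3 + (x 0 ^ 2 + x 1 ^ 2 + x 2 ^ 2)*(-8 - 2*r ^ 2 + 16*c - 8*c ^ 2 + 2*c ^ 2*r ^ 2 + 8*s*r - 8*s*c*r)) + 1*(-(2*r ^ 4*(1-c) ^ 2))) * hr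

/-- the metric tensor of SO(3) in exponential coordinates:
`g_{αβ}(x) = (1/2)⟨D_α(x), D_β(x)⟩_F` has the stated closed form. -/
theorem stmt7 (x : E3) (hx : 0 < ‖x‖) (α β : Fin 3) :
    (1 / 2) * frob (fderiv ℝ (fun y : E3 => NormedSpace.exp (hat y)) x (e α))
                   (fderiv ℝ (fun y : E3 => NormedSpace.exp (hat y)) x (e β)) =
      ((2 * Real.cos ‖x‖ - 2 + ‖x‖ ^ 2) / ‖x‖ ^ 4) * (x α * x β)
        + (2 * (1 - Real.cos ‖x‖) / ‖x‖ ^ 2) * (if α = β then 1 else 0) := by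
  have hr : ‖x‖ ≠ 0 := ne_of_gt hx
  have hip : ∀ γ : Fin 3, (inner ℝ x (e γ) : ℝ) = x γ := by
    intro γ
    simp [e, EuclideanSpace.inner_single_right]
  have hD : ∀ γ : Fin 3,
      fderiv ℝ (fun y : E3 => NormedSpace.exp (hat y)) x (e γ) =
        (‖x‖ ^ 4)⁻¹ • NN x (Real.sin ‖x‖) (Real.cos ‖x‖) ‖x‖ γ := by
    intro γ
    rw [fderiv_exp_hat_apply x hx (e γ), hip γ, NN]
    match_scalars <;> field_simp <;> ring
  rw [hD α, hD β, frob_smul_smul,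
    key x (Real.sin ‖x‖) (Real.cos ‖x‖) ‖x‖ (norm_sq_eq x) (Real.sin_sq_add_cos_sq ‖x‖) α β]
  rcases eq_or_ne α β with h | h
  · subst h
    simp only [if_pos rfl]
    field_simp
    ring
  · simp only [if_neg h]
    field_simp
    ring
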